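/- arXiv:2408.06887 — 3 statements merged into one kernel-verified Lean document; each statement's English description precedes it below -/
import Mathlib

section
/- Let H = H_A ⊗ 1_B + H_AB + 1_A ⊗ H_B be a self-adjoint operator on the tensor product H_A ⊗ H_B of two finite-dimensional Hilbert spaces, where Tr_A(H_AB) = 0 and Tr_B(H_AB) = 0. Suppose ρ̄ = ρ_A ⊗ ρ_B is a positive definite density matrix of product form that commutes with H. Then [ρ_A, H_A] = 0, [ρ_B, H_B] = 0, and [ρ̄, H_AB] = 0. -/
open Matrix Kronecker BigOperators
open scoped ComplexOrder

/-- Partial trace over the second (B) factor. -/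
noncomputable def ptraceB {A B : Type*} [Fintype B] (M : Matrix (A × B) (A × B) ℂ) : Matrix A A ℂ :=
  fun i j => ∑ b, M (i, b) (j, b)

/-- Partial trace over the first (A) factor. -/
noncomputable def ptraceA {A B : Type*} [Fintype A] (M : Matrix (A × B) (A × B) ℂ) : Matrix B B ℂ :=
  fun i j => ∑ a, M (a, i) (a, j)

section Helpers

variable {A B : Type*} [Fintype A] [Fintype B] [DecidableEq A] [DecidableEq B]

set_option linter.unusedSectionVars false

lemma ptraceB_kron_mul (X : Matrix A A ℂ) (M : Matrix (A × B) (A × B) ℂ) :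
    ptraceB ((X ⊗ₖ (1 : Matrix B B ℂ)) * M) = X * ptraceB M := by
  ext i j
  simp only [ptraceB, mul_apply, Fintype.sum_prod_type, kronecker_apply, one_apply,
    mul_ite, mul_one, mul_zero, ite_mul, zero_mul, Finset.sum_ite_eq, Finset.mem_univ, if_true,
    Finset.mul_sum]
  rw [Finset.sum_comm]

lemma ptraceB_mul_kron (Z : Matrix A A ℂ) (M : Matrix (A × B) (A × B) ℂ) :
    ptraceB (M * (Z ⊗ₖ (1 : Matrix B B ℂ))) = ptraceB M * Z := by
  ext i j
  simp only [ptraceB, mul_apply, Fintype.sum_prod_type, kronecker_apply, one_apply,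
    mul_ite, mul_one, mul_zero, ite_mul, zero_mul, Finset.sum_ite_eq, Finset.sum_ite_eq',
    Finset.mem_univ, if_true, Finset.sum_mul]
  rw [Finset.sum_comm]

lemma ptraceB_cyc (Y : Matrix B B ℂ) (M : Matrix (A × B) (A × B) ℂ) :
    ptraceB (((1 : Matrix A A ℂ) ⊗ₖ Y) * M) = ptraceB (M * ((1 : Matrix A A ℂ) ⊗ₖ Y)) := by
  ext i j
  simp only [ptraceB, mul_apply, Fintype.sum_prod_type, kronecker_apply, one_apply,
    mul_ite, mul_one, mul_zero, ite_mul, zero_mul, one_mul]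
  have hL : ∀ b : B, (∑ x_1 : A, ∑ x_2 : B, if i = x_1 then Y b x_2 * M (x_1, x_2) (j, b) else 0)
      = ∑ x_2 : B, Y b x_2 * M (i, x_2) (j, b) := by
    intro b; rw [Finset.sum_comm]; simp
  have hR : ∀ b : B, (∑ x_1 : A, ∑ x_2 : B, if x_1 = j then M (i, b) (x_1, x_2) * Y x_2 b else 0)
      = ∑ x_2 : B, M (i, b) (j, x_2) * Y x_2 b := by
    intro b; rw [Finset.sum_comm]; simp
  simp only [hL, hR]
  rw [Finset.sum_comm]
  exact Finset.sum_congr rfl fun b _ => Finset.sum_congr rfl fun b' _ => mul_comm _ _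

lemma ptraceA_kron_mul (Y : Matrix B B ℂ) (M : Matrix (A × B) (A × B) ℂ) :
    ptraceA (((1 : Matrix A A ℂ) ⊗ₖ Y) * M) = Y * ptraceA M := by
  ext i j
  simp only [ptraceA, mul_apply, Fintype.sum_prod_type, kronecker_apply, one_apply,
    mul_ite, mul_one, mul_zero, ite_mul, zero_mul, one_mul, Finset.mul_sum]
  have hL : ∀ a : A, (∑ x_1 : A, ∑ x_2 : B, if a = x_1 then Y i x_2 * M (x_1, x_2) (a, j) else 0)
      = ∑ x_2 : B, Y i x_2 * M (a, x_2) (a, j) := by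
    intro a; rw [Finset.sum_comm]; simp
  simp only [hL]
  rw [Finset.sum_comm]

lemma ptraceA_mul_kron (W : Matrix B B ℂ) (M : Matrix (A × B) (A × B) ℂ) :
    ptraceA (M * ((1 : Matrix A A ℂ) ⊗ₖ W)) = ptraceA M * W := by
  ext i j
  simp only [ptraceA, mul_apply, Fintype.sum_prod_type, kronecker_apply, one_apply,
    mul_ite, mul_one, mul_zero, ite_mul, zero_mul, one_mul, Finset.sum_mul]
  have hL : ∀ a : A, (∑ x_1 : A, ∑ x_2 : B, if x_1 = a then M (a, i) (x_1, x_2) * W x_2 j else 0)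
      = ∑ x_2 : B, M (a, i) (a, x_2) * W x_2 j := by
    intro a; rw [Finset.sum_comm]; simp
  simp only [hL]
  rw [Finset.sum_comm]

lemma ptraceA_cyc (X : Matrix A A ℂ) (M : Matrix (A × B) (A × B) ℂ) :
    ptraceA ((X ⊗ₖ (1 : Matrix B B ℂ)) * M) = ptraceA (M * (X ⊗ₖ (1 : Matrix B B ℂ))) := by
  ext i j
  simp only [ptraceA, mul_apply, Fintype.sum_prod_type, kronecker_apply, one_apply,
    mul_ite, mul_one, mul_zero, ite_mul, zero_mul, Finset.sum_ite_eq, Finset.sum_ite_eq',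
    Finset.mem_univ, if_true]
  rw [Finset.sum_comm]
  exact Finset.sum_congr rfl fun a _ => Finset.sum_congr rfl fun a' _ => mul_comm _ _

lemma ptraceA_conj_one (X Z : Matrix A A ℂ) (M : Matrix (A × B) (A × B) ℂ) (h : Z * X = 1) :
    ptraceA ((X ⊗ₖ (1 : Matrix B B ℂ)) * M * (Z ⊗ₖ (1 : Matrix B B ℂ))) = ptraceA M := by
  rw [Matrix.mul_assoc, ptraceA_cyc, Matrix.mul_assoc, ← mul_kronecker_mul, h, Matrix.one_mul,
    one_kronecker_one, Matrix.mul_one]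

lemma ptraceB_conj_one (Y W : Matrix B B ℂ) (M : Matrix (A × B) (A × B) ℂ) (h : W * Y = 1) :
    ptraceB (((1 : Matrix A A ℂ) ⊗ₖ Y) * M * ((1 : Matrix A A ℂ) ⊗ₖ W)) = ptraceB M := by
  rw [Matrix.mul_assoc, ptraceB_cyc, Matrix.mul_assoc, ← mul_kronecker_mul, h, Matrix.one_mul,
    one_kronecker_one, Matrix.mul_one]

lemma ptraceA_conj (X Z : Matrix A A ℂ) (Y W : Matrix B B ℂ) (M : Matrix (A × B) (A × B) ℂ)
    (h : Z * X = 1) :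
    ptraceA ((X ⊗ₖ Y) * M * (Z ⊗ₖ W)) = Y * ptraceA M * W := by
  have key : (X ⊗ₖ Y) * M * (Z ⊗ₖ W) = ((1 : Matrix A A ℂ) ⊗ₖ Y) *
      ((X ⊗ₖ (1 : Matrix B B ℂ)) * M * (Z ⊗ₖ (1 : Matrix B B ℂ))) * ((1 : Matrix A A ℂ) ⊗ₖ W) := by
    have hX : (X ⊗ₖ Y) = ((1 : Matrix A A ℂ) ⊗ₖ Y) * (X ⊗ₖ (1 : Matrix B B ℂ)) := by
      rw [← mul_kronecker_mul, Matrix.one_mul, Matrix.mul_one]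
    have hZ : (Z ⊗ₖ W) = (Z ⊗ₖ (1 : Matrix B B ℂ)) * ((1 : Matrix A A ℂ) ⊗ₖ W) := by
      rw [← mul_kronecker_mul, Matrix.one_mul, Matrix.mul_one]
    rw [hX, hZ]; simp only [Matrix.mul_assoc]
  rw [key, Matrix.mul_assoc, ptraceA_kron_mul, ptraceA_mul_kron, ptraceA_conj_one X Z M h,
    Matrix.mul_assoc]

lemma ptraceB_conj (X Z : Matrix A A ℂ) (Y W : Matrix B B ℂ) (M : Matrix (A × B) (A × B) ℂ)
    (h : W * Y = 1) :
    ptraceB ((X ⊗ₖ Y) * M * (Z ⊗ₖ W)) = X * ptraceB M * Z := by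
  have key : (X ⊗ₖ Y) * M * (Z ⊗ₖ W) = (X ⊗ₖ (1 : Matrix B B ℂ)) *
      (((1 : Matrix A A ℂ) ⊗ₖ Y) * M * ((1 : Matrix A A ℂ) ⊗ₖ W)) * (Z ⊗ₖ (1 : Matrix B B ℂ)) := by
    have hX : (X ⊗ₖ Y) = (X ⊗ₖ (1 : Matrix B B ℂ)) * ((1 : Matrix A A ℂ) ⊗ₖ Y) := by
      rw [← mul_kronecker_mul, Matrix.one_mul, Matrix.mul_one]
    have hZ : (Z ⊗ₖ W) = ((1 : Matrix A A ℂ) ⊗ₖ W) * (Z ⊗ₖ (1 : Matrix B B ℂ)) := by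
      rw [← mul_kronecker_mul, Matrix.one_mul, Matrix.mul_one]
    rw [hX, hZ]; simp only [Matrix.mul_assoc]
  rw [key, Matrix.mul_assoc, ptraceB_kron_mul, ptraceB_mul_kron, ptraceB_conj_one Y W M h,
    Matrix.mul_assoc]

lemma kron_conj_mul {n : Type*} [Fintype n] [DecidableEq n] (P Q X Y : Matrix n n ℂ)
    (h : Q * P = 1) : (P * X * Q) * (P * Y * Q) = P * (X * Y) * Q := by
  simp only [Matrix.mul_assoc]
  rw [← Matrix.mul_assoc Q P, h, Matrix.one_mul]

lemma kron_conj_cancel {n : Type*} [Fintype n] [DecidableEq n] (P Q X Y : Matrix n n ℂ)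
    (hQP : Q * P = 1) (h : P * X * Q = P * Y * Q) : X = Y := by
  have h2 : Q * (P * X * Q) * P = Q * (P * Y * Q) * P := by rw [h]
  simp only [← Matrix.mul_assoc] at h2
  rw [hQP, Matrix.one_mul, Matrix.one_mul, Matrix.mul_assoc X, Matrix.mul_assoc Y, hQP,
    Matrix.mul_one, Matrix.mul_one] at h2
  exact h2

lemma core [Nonempty A] [Nonempty B]
    (HA : Matrix A A ℂ) (HB : Matrix B B ℂ) (HAB : Matrix (A × B) (A × B) ℂ)
    (htrA : ptraceA HAB = 0) (htrB : ptraceB HAB = 0)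
    (d : A → ℂ) (e : B → ℂ) (hd : ∀ a, d a ≠ 0) (he : ∀ b, e b ≠ 0)
    (hcomm : diagonal (fun p : A × B => d p.1 * e p.2) *
        (HA ⊗ₖ (1 : Matrix B B ℂ) + HAB + (1 : Matrix A A ℂ) ⊗ₖ HB)
      = (HA ⊗ₖ (1 : Matrix B B ℂ) + HAB + (1 : Matrix A A ℂ) ⊗ₖ HB) *
        diagonal (fun p : A × B => d p.1 * e p.2)) :
    diagonal d * HA = HA * diagonal d ∧ diagonal e * HB = HB * diagonal e ∧
      diagonal (fun p : A × B => d p.1 * e p.2) * HAB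
        = HAB * diagonal (fun p : A × B => d p.1 * e p.2) := by
  have key : ∀ i j : A × B, d i.1 * e i.2 ≠ d j.1 * e j.2 →
      (HA ⊗ₖ (1 : Matrix B B ℂ) + HAB + (1 : Matrix A A ℂ) ⊗ₖ HB) i j = 0 := by
    intro i j hne
    have h0 := congrFun (congrFun hcomm i) j
    simp only [diagonal_mul, mul_diagonal] at h0
    by_contra hG
    exact hne (mul_right_cancel₀ hG (h0.trans (mul_comm _ _)))
  have Gentry : ∀ (a a' : A) (b b' : B),
      (HA ⊗ₖ (1 : Matrix B B ℂ) + HAB + (1 : Matrix A A ℂ) ⊗ₖ HB) (a, b) (a', b')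
      = HA a a' * (if b = b' then 1 else 0) + HAB (a, b) (a', b')
        + (if a = a' then 1 else 0) * HB b b' := by
    intro a a' b b'
    simp [Matrix.add_apply, kronecker_apply, one_apply]
  have stepA : ∀ a a' : A, d a ≠ d a' → HA a a' = 0 := by
    intro a a' hne
    have hne' : a ≠ a' := fun h => hne (by rw [h])
    have h1 : ∀ b : B, HA a a' + HAB (a, b) (a', b) = 0 := by
      intro b
      have hk := key (a, b) (a', b) (fun h => hne (mul_right_cancel₀ (he b) h))
      rw [Gentry] at hk
      simpa [hne'] using hk
    have h4 : ∑ b : B, HAB (a, b) (a', b) = 0 := by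
      have := congrFun (congrFun htrB a) a'
      simpa [ptraceB] using this
    have h3 : (Fintype.card B : ℂ) * HA a a' = 0 := by
      have h5 : ∑ b : B, (HA a a' + HAB (a, b) (a', b)) = 0 := by simp [h1]
      rw [Finset.sum_add_distrib, h4, add_zero, Finset.sum_const, nsmul_eq_mul,
        Finset.card_univ] at h5
      exact h5
    have hcard : (Fintype.card B : ℂ) ≠ 0 := by
      exact_mod_cast Fintype.card_ne_zero
    exact (mul_eq_zero.mp h3).resolve_left hcard
  have stepB : ∀ b b' : B, e b ≠ e b' → HB b b' = 0 := by
    intro b b' hne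
    have hne' : b ≠ b' := fun h => hne (by rw [h])
    have h1 : ∀ a : A, HAB (a, b) (a, b') + HB b b' = 0 := by
      intro a
      have hk := key (a, b) (a, b') (fun h => hne (mul_left_cancel₀ (hd a) h))
      rw [Gentry] at hk
      simpa [hne'] using hk
    have h4 : ∑ a : A, HAB (a, b) (a, b') = 0 := by
      have := congrFun (congrFun htrA b) b'
      simpa [ptraceA] using this
    have h3 : (Fintype.card A : ℂ) * HB b b' = 0 := by
      have h5 : ∑ a : A, (HAB (a, b) (a, b') + HB b b') = 0 := by simp [h1]
      rw [Finset.sum_add_distrib, h4, zero_add, Finset.sum_const, nsmul_eq_mul,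
        Finset.card_univ] at h5
      exact h5
    have hcard : (Fintype.card A : ℂ) ≠ 0 := by
      exact_mod_cast Fintype.card_ne_zero
    exact (mul_eq_zero.mp h3).resolve_left hcard
  have stepAB : ∀ i j : A × B, d i.1 * e i.2 ≠ d j.1 * e j.2 → HAB i j = 0 := by
    rintro ⟨a, b⟩ ⟨a', b'⟩ hne
    have hk := key (a, b) (a', b') hne
    rw [Gentry] at hk
    by_cases ha : a = a'
    · subst ha
      by_cases hb : b = b'
      · subst hb; exact absurd rfl hne
      · have hB0 : HB b b' = 0 := stepB b b' (fun h => hne (by simp [h]))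
        simpa [hb, hB0] using hk
    · by_cases hb : b = b'
      · subst hb
        have hA0 : HA a a' = 0 := stepA a a' (fun h => hne (by simp [h]))
        simpa [ha, hA0] using hk
      · simpa [ha, hb] using hk
  refine ⟨?_, ?_, ?_⟩
  · ext a a'
    simp only [diagonal_mul, mul_diagonal]
    by_cases h : d a = d a'
    · rw [h, mul_comm]
    · rw [stepA a a' h, mul_zero, zero_mul]
  · ext b b'
    simp only [diagonal_mul, mul_diagonal]
    by_cases h : e b = e b'
    · rw [h, mul_comm]
    · rw [stepB b b' h, mul_zero, zero_mul]
  · ext i j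
    simp only [diagonal_mul, mul_diagonal]
    by_cases h : d i.1 * e i.2 = d j.1 * e j.2
    · rw [h, mul_comm]
    · rw [stepAB i j h, mul_zero, zero_mul]

end Helpers

theorem stmt_1 {A B : Type*} [Fintype A] [Fintype B] [DecidableEq A] [DecidableEq B]
    (HA : Matrix A A ℂ) (HB : Matrix B B ℂ) (HAB : Matrix (A × B) (A × B) ℂ)
    (hHA : HA.IsHermitian) (hHB : HB.IsHermitian) (hHAB : HAB.IsHermitian)
    (htrA : ptraceA HAB = 0) (htrB : ptraceB HAB = 0)
    (ρA : Matrix A A ℂ) (ρB : Matrix B B ℂ)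
    (hρA : ρA.PosDef) (hρAtr : ρA.trace = 1)
    (hρB : ρB.PosDef) (hρBtr : ρB.trace = 1)
    (H : Matrix (A × B) (A × B) ℂ)
    (hH : H = HA ⊗ₖ (1 : Matrix B B ℂ) + HAB + (1 : Matrix A A ℂ) ⊗ₖ HB)
    (hcomm : (ρA ⊗ₖ ρB) * H = H * (ρA ⊗ₖ ρB)) :
    ρA * HA = HA * ρA ∧ ρB * HB = HB * ρB ∧
      (ρA ⊗ₖ ρB) * HAB = HAB * (ρA ⊗ₖ ρB) := by
  haveI : Nonempty A := by
    by_contra h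
    rw [not_nonempty_iff] at h
    simp [Matrix.trace] at hρAtr
  haveI : Nonempty B := by
    by_contra h
    rw [not_nonempty_iff] at h
    simp [Matrix.trace] at hρBtr
  set U : Matrix A A ℂ := (hρA.1.eigenvectorUnitary : Matrix A A ℂ) with hUdef
  set V : Matrix B B ℂ := (hρB.1.eigenvectorUnitary : Matrix B B ℂ) with hVdef
  set d : A → ℂ := fun a => ((hρA.1.eigenvalues a : ℝ) : ℂ) with hddef
  set e : B → ℂ := fun b => ((hρB.1.eigenvalues b : ℝ) : ℂ) with hedef
  have hd : ∀ a, d a ≠ 0 := fun a =>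
    Complex.ofReal_ne_zero.mpr (ne_of_gt (hρA.eigenvalues_pos a))
  have he : ∀ b, e b ≠ 0 := fun b =>
    Complex.ofReal_ne_zero.mpr (ne_of_gt (hρB.eigenvalues_pos b))
  have hU1 : star U * U = 1 := Matrix.mem_unitaryGroup_iff'.mp hρA.1.eigenvectorUnitary.2
  have hU2 : U * star U = 1 := Matrix.mem_unitaryGroup_iff.mp hρA.1.eigenvectorUnitary.2
  have hV1 : star V * V = 1 := Matrix.mem_unitaryGroup_iff'.mp hρB.1.eigenvectorUnitary.2
  have hV2 : V * star V = 1 := Matrix.mem_unitaryGroup_iff.mp hρB.1.eigenvectorUnitary.2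
  have hρAdiag : star U * ρA * U = diagonal d := by
    conv_lhs => rw [hρA.1.spectral_theorem, Unitary.conjStarAlgAut_apply]
    simp only [Matrix.mul_assoc]
    rw [hU1, Matrix.mul_one, ← Matrix.mul_assoc, hU1, Matrix.one_mul]
    rfl
  have hρBdiag : star V * ρB * V = diagonal e := by
    conv_lhs => rw [hρB.1.spectral_theorem, Unitary.conjStarAlgAut_apply]
    simp only [Matrix.mul_assoc]
    rw [hV1, Matrix.mul_one, ← Matrix.mul_assoc, hV1, Matrix.one_mul]
    rfl
  set P : Matrix (A × B) (A × B) ℂ := (star U) ⊗ₖ (star V) with hPdef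
  set Q : Matrix (A × B) (A × B) ℂ := U ⊗ₖ V with hQdef
  have hPQ : P * Q = 1 := by
    rw [hPdef, hQdef, ← mul_kronecker_mul, hU1, hV1, one_kronecker_one]
  have hQP : Q * P = 1 := by
    rw [hPdef, hQdef, ← mul_kronecker_mul, hU2, hV2, one_kronecker_one]
  have c1 : P * (ρA ⊗ₖ ρB) * Q = diagonal (fun p : A × B => d p.1 * e p.2) := by
    rw [hPdef, hQdef, ← mul_kronecker_mul, ← mul_kronecker_mul, hρAdiag, hρBdiag,
      diagonal_kronecker_diagonal]
  have c2 : P * H * Q = (star U * HA * U) ⊗ₖ (1 : Matrix B B ℂ) + P * HAB * Q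
      + (1 : Matrix A A ℂ) ⊗ₖ (star V * HB * V) := by
    rw [hH, Matrix.mul_add, Matrix.mul_add, Matrix.add_mul, Matrix.add_mul]
    congr 1
    · congr 1
      rw [hPdef, hQdef, ← mul_kronecker_mul, ← mul_kronecker_mul, Matrix.mul_one, hV1]
    · rw [hPdef, hQdef, ← mul_kronecker_mul, ← mul_kronecker_mul, Matrix.mul_one, hU1]
  have hcomm' : diagonal (fun p : A × B => d p.1 * e p.2) *
      ((star U * HA * U) ⊗ₖ (1 : Matrix B B ℂ) + P * HAB * Q
        + (1 : Matrix A A ℂ) ⊗ₖ (star V * HB * V))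
      = ((star U * HA * U) ⊗ₖ (1 : Matrix B B ℂ) + P * HAB * Q
        + (1 : Matrix A A ℂ) ⊗ₖ (star V * HB * V)) *
        diagonal (fun p : A × B => d p.1 * e p.2) := by
    rw [← c1, ← c2, kron_conj_mul _ _ _ _ hQP, kron_conj_mul _ _ _ _ hQP, hcomm]
  have htrA' : ptraceA (P * HAB * Q) = 0 := by
    rw [hPdef, hQdef, ptraceA_conj _ _ _ _ _ hU2, htrA, Matrix.mul_zero, Matrix.zero_mul]
  have htrB' : ptraceB (P * HAB * Q) = 0 := by
    rw [hPdef, hQdef, ptraceB_conj _ _ _ _ _ hV2, htrB, Matrix.mul_zero, Matrix.zero_mul]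
  obtain ⟨g1, g2, g3⟩ := core (star U * HA * U) (star V * HB * V) (P * HAB * Q)
    htrA' htrB' d e hd he hcomm'
  refine ⟨?_, ?_, ?_⟩
  · apply kron_conj_cancel (star U) U _ _ hU2
    rw [← kron_conj_mul (star U) U ρA HA hU2, ← kron_conj_mul (star U) U HA ρA hU2, hρAdiag]
    exact g1
  · apply kron_conj_cancel (star V) V _ _ hV2
    rw [← kron_conj_mul (star V) V ρB HB hV2, ← kron_conj_mul (star V) V HB ρB hV2, hρBdiag]
    exact g2
  · apply kron_conj_cancel P Q _ _ hQP
    rw [← kron_conj_mul P Q _ _ hQP, ← kron_conj_mul P Q _ _ hQP, c1]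
    exact g3
end

section
/- Consider the XX chain Hamiltonian H = Σ_{j=1}^{ℓ−1} (a_j† a_{j+1} + a_{j+1}† a_j) on (ℂ²)^{⊗ℓ}, ℓ ≥ 2, where a_j acts as a = |0⟩⟨1| on site j and identity elsewhere. If X is a traceless self-adjoint operator on the last ℓ−1 sites (sites 2 through ℓ) with [H, 1 ⊗ X] = 0, then X = 0. -/
open Matrix BigOperators

/-- The single-site annihilation operator `a = |0⟩⟨1|` on `ℂ²`. -/
noncomputable def aSite : Matrix (Fin 2) (Fin 2) ℂ := Matrix.single 0 1 1

/-- `a_j`: the operator on `(ℂ²)^{⊗ℓ}` acting as `a` on site `j` and identity elsewhere. -/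
noncomputable def aOp (ℓ : ℕ) (j : Fin ℓ) :
    Matrix (Fin ℓ → Fin 2) (Fin ℓ → Fin 2) ℂ :=
  fun s t => (if ∀ k, k ≠ j → s k = t k then 1 else 0) * aSite (s j) (t j)

/-- The XX chain Hamiltonian `H = Σ_{j=1}^{ℓ−1} (a_j† a_{j+1} + a_{j+1}† a_j)`
on a chain of `ℓ = m+2` sites. -/
noncomputable def xxHam (m : ℕ) :
    Matrix (Fin (m + 2) → Fin 2) (Fin (m + 2) → Fin 2) ℂ :=
  ∑ j : Fin (m + 1),
    ((aOp (m + 2) j.castSucc)ᴴ * aOp (m + 2) j.succ +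
      (aOp (m + 2) j.succ)ᴴ * aOp (m + 2) j.castSucc)

/-- `1 ⊗ X`: the operator acting as the identity on site `1` and as `X` on sites `2,…,ℓ`. -/
noncomputable def tailEmbed (m : ℕ)
    (X : Matrix (Fin (m + 1) → Fin 2) (Fin (m + 1) → Fin 2) ℂ) :
    Matrix (Fin (m + 2) → Fin 2) (Fin (m + 2) → Fin 2) ℂ :=
  fun s t => (if s 0 = t 0 then 1 else 0) * X (fun k => s k.succ) (fun k => t k.succ)

namespace XXU

lemma aOp_eq {ℓ : ℕ} (i : Fin ℓ) (s u : Fin ℓ → Fin 2) :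
    aOp ℓ i s u = if s i = 0 ∧ u = Function.update s i 1 then 1 else 0 := by
  have key : ((∀ k, k ≠ i → s k = u k) ∧ ((0:Fin 2) = s i ∧ (1:Fin 2) = u i)) ↔
      (s i = 0 ∧ u = Function.update s i 1) := by
    constructor
    · rintro ⟨h1, h2, h3⟩
      refine ⟨h2.symm, funext fun k => ?_⟩
      rcases eq_or_ne k i with rfl | hk
      · simp [← h3]
      · simp [Function.update_of_ne hk, (h1 k hk).symm]
    · rintro ⟨h1, rfl⟩
      refine ⟨fun k hk => by simp [Function.update_of_ne hk], h1.symm, by simp⟩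
  show (if ∀ k, k ≠ i → s k = u k then (1:ℂ) else 0) * aSite (s i) (u i) = _
  have ha : aSite (s i) (u i) = if (0:Fin 2) = s i ∧ (1:Fin 2) = u i then (1:ℂ) else 0 := by
    simp [aSite, Matrix.single, Matrix.of_apply]
  rw [ha]
  by_cases hC : s i = 0 ∧ u = Function.update s i 1
  · obtain ⟨hA, hB⟩ := key.mpr hC
    rw [if_pos hA, if_pos hB, if_pos hC, one_mul]
  · rw [if_neg hC]
    by_cases hA : ∀ k, k ≠ i → s k = u k
    · by_cases hB : (0:Fin 2) = s i ∧ (1:Fin 2) = u i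
      · exact absurd (key.mp ⟨hA, hB⟩) hC
      · simp [hB]
    · simp [hA]

lemma aOp_eq' {ℓ : ℕ} (i : Fin ℓ) (u s : Fin ℓ → Fin 2) :
    aOp ℓ i u s = if s i = 1 ∧ u = Function.update s i 0 then 1 else 0 := by
  rw [aOp_eq]
  congr 1
  apply propext
  constructor
  · rintro ⟨h1, rfl⟩
    refine ⟨by simp, funext fun k => ?_⟩
    rcases eq_or_ne k i with rfl | hk
    · simp [h1]
    · simp [Function.update_of_ne hk]
  · rintro ⟨h1, rfl⟩
    refine ⟨by simp, funext fun k => ?_⟩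
    rcases eq_or_ne k i with rfl | hk
    · simp [h1]
    · simp [Function.update_of_ne hk]

variable {ℓ : ℕ}

lemma conj_aOp_mul_apply (i : Fin ℓ) (Y : Matrix (Fin ℓ → Fin 2) (Fin ℓ → Fin 2) ℂ)
    (s t : Fin ℓ → Fin 2) :
    ((aOp ℓ i)ᴴ * Y) s t = if s i = 1 then Y (Function.update s i 0) t else 0 := by
  rw [Matrix.mul_apply]
  have h : ∀ u, (aOp ℓ i)ᴴ s u * Y u t
      = if u = Function.update s i 0 then (if s i = 1 then Y u t else 0) else 0 := by
    intro u
    rw [Matrix.conjTranspose_apply, aOp_eq']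
    by_cases h1 : s i = 1 <;> by_cases h2 : u = Function.update s i 0 <;> simp [h1, h2]
  simp only [h, Finset.sum_ite_eq', Finset.mem_univ, if_true]

lemma aOp_mul_apply (i : Fin ℓ) (Y : Matrix (Fin ℓ → Fin 2) (Fin ℓ → Fin 2) ℂ)
    (s t : Fin ℓ → Fin 2) :
    (aOp ℓ i * Y) s t = if s i = 0 then Y (Function.update s i 1) t else 0 := by
  rw [Matrix.mul_apply]
  have h : ∀ u, aOp ℓ i s u * Y u t
      = if u = Function.update s i 1 then (if s i = 0 then Y u t else 0) else 0 := by
    intro u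
    rw [aOp_eq]
    by_cases h1 : s i = 0 <;> by_cases h2 : u = Function.update s i 1 <;> simp [h1, h2]
  simp only [h, Finset.sum_ite_eq', Finset.mem_univ, if_true]

lemma mul_aOp_apply (i : Fin ℓ) (Y : Matrix (Fin ℓ → Fin 2) (Fin ℓ → Fin 2) ℂ)
    (s t : Fin ℓ → Fin 2) :
    (Y * aOp ℓ i) s t = if t i = 1 then Y s (Function.update t i 0) else 0 := by
  rw [Matrix.mul_apply]
  have h : ∀ u, Y s u * aOp ℓ i u t
      = if u = Function.update t i 0 then (if t i = 1 then Y s u else 0) else 0 := by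
    intro u
    rw [aOp_eq']
    by_cases h1 : t i = 1 <;> by_cases h2 : u = Function.update t i 0 <;> simp [h1, h2]
  simp only [h, Finset.sum_ite_eq', Finset.mem_univ, if_true]

lemma mul_conj_aOp_apply (i : Fin ℓ) (Y : Matrix (Fin ℓ → Fin 2) (Fin ℓ → Fin 2) ℂ)
    (s t : Fin ℓ → Fin 2) :
    (Y * (aOp ℓ i)ᴴ) s t = if t i = 0 then Y s (Function.update t i 1) else 0 := by
  rw [Matrix.mul_apply]
  have h : ∀ u, Y s u * (aOp ℓ i)ᴴ u t
      = if u = Function.update t i 1 then (if t i = 0 then Y s u else 0) else 0 := by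
    intro u
    rw [Matrix.conjTranspose_apply, aOp_eq]
    by_cases h1 : t i = 0 <;> by_cases h2 : u = Function.update t i 1 <;> simp [h1, h2]
  simp only [h, Finset.sum_ite_eq', Finset.mem_univ, if_true]

end XXU

-- continuing inside namespace XXU (appended for test)
section P2
variable {ℓ : ℕ}
open XXU

namespace XXU

lemma hop_mul_apply (i k : Fin ℓ) (hik : i ≠ k) (Y : Matrix (Fin ℓ → Fin 2) (Fin ℓ → Fin 2) ℂ)
    (s t : Fin ℓ → Fin 2) :
    ((aOp ℓ i)ᴴ * aOp ℓ k * Y) s t =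
      if s i = 1 ∧ s k = 0 then Y (Function.update (Function.update s i 0) k 1) t else 0 := by
  rw [Matrix.mul_assoc, conj_aOp_mul_apply]
  rw [ite_and]
  by_cases h1 : s i = 1
  · rw [if_pos h1, if_pos h1, aOp_mul_apply, Function.update_of_ne (Ne.symm hik)]
  · rw [if_neg h1, if_neg h1]

lemma mul_hop_apply (i k : Fin ℓ) (hik : i ≠ k) (Y : Matrix (Fin ℓ → Fin 2) (Fin ℓ → Fin 2) ℂ)
    (s t : Fin ℓ → Fin 2) :
    (Y * ((aOp ℓ i)ᴴ * aOp ℓ k)) s t =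
      if t k = 1 ∧ t i = 0 then Y s (Function.update (Function.update t k 0) i 1) else 0 := by
  rw [← Matrix.mul_assoc, mul_aOp_apply]
  rw [ite_and]
  by_cases h1 : t k = 1
  · rw [if_pos h1, if_pos h1, mul_conj_aOp_apply, Function.update_of_ne hik]
  · rw [if_neg h1, if_neg h1]

lemma ham_mul_apply (m : ℕ) (Z : Matrix (Fin (m+2) → Fin 2) (Fin (m+2) → Fin 2) ℂ)
    (s t : Fin (m+2) → Fin 2) :
    (xxHam m * Z) s t = ∑ j : Fin (m+1),
      ((if s j.castSucc = 1 ∧ s j.succ = 0 then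
          Z (Function.update (Function.update s j.castSucc 0) j.succ 1) t else 0)
       + (if s j.succ = 1 ∧ s j.castSucc = 0 then
          Z (Function.update (Function.update s j.succ 0) j.castSucc 1) t else 0)) := by
  unfold xxHam
  rw [Matrix.sum_mul, Matrix.sum_apply]
  refine Finset.sum_congr rfl fun j _ => ?_
  rw [Matrix.add_mul, Matrix.add_apply,
    hop_mul_apply _ _ (@Fin.castSucc_lt_succ _ j).ne,
    hop_mul_apply _ _ (@Fin.castSucc_lt_succ _ j).ne']

lemma mul_ham_apply (m : ℕ) (Z : Matrix (Fin (m+2) → Fin 2) (Fin (m+2) → Fin 2) ℂ)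
    (s t : Fin (m+2) → Fin 2) :
    (Z * xxHam m) s t = ∑ j : Fin (m+1),
      ((if t j.succ = 1 ∧ t j.castSucc = 0 then
          Z s (Function.update (Function.update t j.succ 0) j.castSucc 1) else 0)
       + (if t j.castSucc = 1 ∧ t j.succ = 0 then
          Z s (Function.update (Function.update t j.castSucc 0) j.succ 1) else 0)) := by
  unfold xxHam
  rw [Matrix.mul_sum, Matrix.sum_apply]
  refine Finset.sum_congr rfl fun j _ => ?_
  rw [Matrix.mul_add, Matrix.add_apply,
    mul_hop_apply _ _ (@Fin.castSucc_lt_succ _ j).ne,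
    mul_hop_apply _ _ (@Fin.castSucc_lt_succ _ j).ne']

lemma tailEmbed_apply_ne {m : ℕ} (Z : Matrix (Fin (m+1) → Fin 2) (Fin (m+1) → Fin 2) ℂ)
    {s t : Fin (m+2) → Fin 2} (h : s 0 ≠ t 0) : tailEmbed m Z s t = 0 := by
  show (if s 0 = t 0 then (1:ℂ) else 0) * _ = 0
  rw [if_neg h, zero_mul]

lemma tailEmbed_cons {m : ℕ} (Z : Matrix (Fin (m+1) → Fin 2) (Fin (m+1) → Fin 2) ℂ)
    (a : Fin 2) (p q : Fin (m+1) → Fin 2) :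
    tailEmbed m Z (Fin.cons a p) (Fin.cons a q) = Z p q := by
  show (if _ = _ then (1:ℂ) else 0) * Z _ _ = _
  simp [Fin.cons_succ, Fin.cons_zero]

end XXU
end P2

namespace XXU

lemma lemA (m : ℕ) (X : Matrix (Fin (m + 1) → Fin 2) (Fin (m + 1) → Fin 2) ℂ)
    (hcomm : xxHam m * tailEmbed m X = tailEmbed m X * xxHam m)
    (p q : Fin (m+1) → Fin 2) :
    (if p 0 = 0 then X (Function.update p 0 1) q else 0)
      = (if q 0 = 1 then X p (Function.update q 0 0) else 0) := by
  have zL : ∀ (a b : Fin (m+2)), a ≠ 0 → b ≠ 0 → ∀ (C : Prop) (_ : Decidable C),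
      (if C then tailEmbed m X
        (Function.update (Function.update (Fin.cons 1 p) a 0) b 1) (Fin.cons 0 q) else 0)
        = (0 : ℂ) := by
    intro a b ha hb C _
    split_ifs with hC
    · apply tailEmbed_apply_ne
      rw [Function.update_of_ne (Ne.symm hb), Function.update_of_ne (Ne.symm ha)]
      simp
    · rfl
  have zR : ∀ (a b : Fin (m+2)), a ≠ 0 → b ≠ 0 → ∀ (C : Prop) (_ : Decidable C),
      (if C then tailEmbed m X (Fin.cons 1 p)
        (Function.update (Function.update (Fin.cons 0 q) a 0) b 1) else 0)
        = (0 : ℂ) := by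
    intro a b ha hb C _
    split_ifs with hC
    · apply tailEmbed_apply_ne
      rw [Function.update_of_ne (Ne.symm hb), Function.update_of_ne (Ne.symm ha)]
      simp
    · rfl
  have h := congrFun (congrFun hcomm (Fin.cons 1 p)) (Fin.cons 0 q)
  rw [ham_mul_apply, mul_ham_apply] at h
  have hL : ∑ j : Fin (m+1),
      ((if (Fin.cons 1 p : Fin (m+2) → Fin 2) j.castSucc = 1 ∧
            (Fin.cons 1 p : Fin (m+2) → Fin 2) j.succ = 0 then
          tailEmbed m X (Function.update (Function.update (Fin.cons 1 p) j.castSucc 0) j.succ 1)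
            (Fin.cons 0 q) else 0)
       + (if (Fin.cons 1 p : Fin (m+2) → Fin 2) j.succ = 1 ∧
            (Fin.cons 1 p : Fin (m+2) → Fin 2) j.castSucc = 0 then
          tailEmbed m X (Function.update (Function.update (Fin.cons 1 p) j.succ 0) j.castSucc 1)
            (Fin.cons 0 q) else 0))
      = (if p 0 = 0 then X (Function.update p 0 1) q else 0) := by
    refine (Finset.sum_eq_single_of_mem 0 (Finset.mem_univ _) fun j _ hj => ?_).trans ?_
    · have hcs : (j.castSucc : Fin (m+2)) ≠ 0 := by rwa [Ne, Fin.castSucc_eq_zero_iff]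
      rw [zL _ _ hcs (Fin.succ_ne_zero j), zL _ _ (Fin.succ_ne_zero j) hcs, add_zero]
    · simp only [Fin.castSucc_zero]
      rw [Fin.update_cons_zero, ← Fin.cons_update, tailEmbed_cons]
      simp only [Fin.cons_succ, Fin.cons_zero]
      simp
  have hR : ∑ j : Fin (m+1),
      ((if (Fin.cons 0 q : Fin (m+2) → Fin 2) j.succ = 1 ∧
            (Fin.cons 0 q : Fin (m+2) → Fin 2) j.castSucc = 0 then
          tailEmbed m X (Fin.cons 1 p)
            (Function.update (Function.update (Fin.cons 0 q) j.succ 0) j.castSucc 1) else 0)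
       + (if (Fin.cons 0 q : Fin (m+2) → Fin 2) j.castSucc = 1 ∧
            (Fin.cons 0 q : Fin (m+2) → Fin 2) j.succ = 0 then
          tailEmbed m X (Fin.cons 1 p)
            (Function.update (Function.update (Fin.cons 0 q) j.castSucc 0) j.succ 1) else 0))
      = (if q 0 = 1 then X p (Function.update q 0 0) else 0) := by
    refine (Finset.sum_eq_single_of_mem 0 (Finset.mem_univ _) fun j _ hj => ?_).trans ?_
    · have hcs : (j.castSucc : Fin (m+2)) ≠ 0 := by rwa [Ne, Fin.castSucc_eq_zero_iff]
      rw [zR _ _ (Fin.succ_ne_zero j) hcs, zR _ _ hcs (Fin.succ_ne_zero j), add_zero]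
    · simp only [Fin.castSucc_zero]
      rw [← Fin.cons_update, Fin.update_cons_zero, tailEmbed_cons]
      simp only [Fin.cons_succ, Fin.cons_zero]
      simp
  rw [hL, hR] at h
  exact h

end XXU

namespace XXU

lemma fin2_cases (a : Fin 2) : a = 0 ∨ a = 1 := by omega

lemma tailEmbed_cons' {m : ℕ} (Z : Matrix (Fin (m+1) → Fin 2) (Fin (m+1) → Fin 2) ℂ)
    (a b : Fin 2) (p q : Fin (m+1) → Fin 2) :
    tailEmbed m Z (Fin.cons a p) (Fin.cons b q) = (if a = b then 1 else 0) * Z p q := by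
  show (if _ = _ then (1:ℂ) else 0) * Z _ _ = _
  simp [Fin.cons_zero, Fin.cons_succ]

lemma sum_pi_succ {k : ℕ} (f : (Fin (k+1) → Fin 2) → ℂ) :
    ∑ s, f s = ∑ a : Fin 2, ∑ p : Fin k → Fin 2, f (Fin.cons a p) := by
  rw [← Equiv.sum_comp (Fin.consEquiv fun _ => Fin 2) f, Fintype.sum_prod_type]
  rfl

lemma key : ∀ m : ℕ, ∀ X : Matrix (Fin (m+1) → Fin 2) (Fin (m+1) → Fin 2) ℂ,
    X.IsHermitian → X.trace = 0 →
    xxHam m * tailEmbed m X = tailEmbed m X * xxHam m → X = 0 := by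
  intro m
  induction m with
  | zero =>
    intro X hherm htr hcomm
    have A := lemA 0 X hcomm
    have hupd : ∀ (p : Fin 1 → Fin 2) (v : Fin 2), Function.update p 0 v = fun _ => v :=
      fun p v => funext fun k => by rw [show k = 0 from by omega, Function.update_self]
    set c0 : Fin 1 → Fin 2 := fun _ => 0 with hc0
    set c1 : Fin 1 → Fin 2 := fun _ => 1 with hc1
    have h10 : X c1 c0 = 0 := by
      have h := A c1 c1
      rw [if_neg (by show (1:Fin 2) = 0 → False; decide),
        if_pos (by rw [hc1]), hupd c1 0] at h
      exact h.symm
    have h01 : X c0 c1 = 0 := by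
      have h := congrFun (congrFun hherm c0) c1
      rw [Matrix.conjTranspose_apply] at h
      rw [← h, h10, star_zero]
    have hdiag : X c1 c1 = X c0 c0 := by
      have h := A c0 c1
      rw [if_pos (by rw [hc0]), if_pos (by rw [hc1]), hupd c0 1, hupd c1 0] at h
      exact h
    have htr' : X c0 c0 + X c1 c1 = 0 := by
      have h := htr
      rw [Matrix.trace] at h
      rw [show ∑ i, X.diag i = ∑ s, X s s from rfl, sum_pi_succ, Fin.sum_univ_two] at h
      have e0 : ∀ (a : Fin 2) (p : Fin 0 → Fin 2), Fin.cons a p = fun _ => a :=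
        fun a p => funext fun k => by rw [show k = 0 from by omega, Fin.cons_zero]
      simpa [e0] using h
    have h00 : X c0 c0 = 0 := by
      rw [hdiag] at htr'
      exact add_self_eq_zero.mp htr'
    ext p q
    have hp : p = fun _ => p 0 := funext fun k => by rw [show k = 0 from by omega]
    have hq : q = fun _ => q 0 := funext fun k => by rw [show k = 0 from by omega]
    rw [Matrix.zero_apply, hp, hq]
    rcases fin2_cases (p 0) with h1 | h1 <;> rcases fin2_cases (q 0) with h2 | h2 <;>
      rw [h1, h2]
    · exact h00
    · exact h01
    · exact h10
    · rw [show X c1 c1 = 0 from hdiag.trans h00]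
  | succ n ih =>
    intro X hherm htr hcomm
    have A := lemA (n+1) X hcomm
    have R1 : ∀ p q : Fin (n+2) → Fin 2, p 0 = 1 → q 0 = 0 → X p q = 0 := by
      intro p q hp hq
      have h := A p (Function.update q 0 1)
      rw [if_neg (by rw [hp]; decide), if_pos (by rw [Function.update_self]),
        Function.update_idem] at h
      rw [show Function.update q 0 (0:Fin 2) = q from by
        rw [← hq]; exact Function.update_eq_self 0 q] at h
      exact h.symm
    have R1' : ∀ p q : Fin (n+2) → Fin 2, p 0 = 0 → q 0 = 1 → X p q = 0 := by
      intro p q hp hq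
      have h := congrFun (congrFun hherm p) q
      rw [Matrix.conjTranspose_apply] at h
      rw [← h, R1 q p hq hp, star_zero]
    have R2 : ∀ p q : Fin (n+2) → Fin 2, p 0 = 1 → q 0 = 1 →
        X p q = X (Function.update p 0 0) (Function.update q 0 0) := by
      intro p q hp hq
      have h := A (Function.update p 0 0) q
      rw [if_pos (by rw [Function.update_self]), if_pos hq, Function.update_idem] at h
      rw [show Function.update p 0 (1:Fin 2) = p from by
        rw [← hp]; exact Function.update_eq_self 0 p] at h
      exact h
    set X' : Matrix (Fin (n+1) → Fin 2) (Fin (n+1) → Fin 2) ℂ :=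
      Matrix.of (fun p q => X (Fin.cons 0 p) (Fin.cons 0 q)) with hX'def
    have hXeq : X = tailEmbed n X' := by
      ext s t
      show X s t = (if s 0 = t 0 then (1:ℂ) else 0) * X' (fun k => s k.succ) (fun k => t k.succ)
      rcases fin2_cases (s 0) with hs | hs <;> rcases fin2_cases (t 0) with ht | ht
      · rw [hs, ht, if_pos rfl, one_mul]
        calc X s t = X (Fin.cons (s 0) (Fin.tail s)) (Fin.cons (t 0) (Fin.tail t)) := by
              rw [Fin.cons_self_tail, Fin.cons_self_tail]
          _ = X (Fin.cons 0 (Fin.tail s)) (Fin.cons 0 (Fin.tail t)) := by rw [hs, ht]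
          _ = _ := rfl
      · rw [hs, ht, if_neg (by decide), zero_mul]
        exact R1' s t hs ht
      · rw [hs, ht, if_neg (by decide), zero_mul]
        exact R1 s t hs ht
      · rw [hs, ht, if_pos rfl, one_mul]
        have e := R2 (Fin.cons 1 (Fin.tail s)) (Fin.cons 1 (Fin.tail t))
          (by rw [Fin.cons_zero]) (by rw [Fin.cons_zero])
        rw [Fin.update_cons_zero, Fin.update_cons_zero] at e
        calc X s t = X (Fin.cons (s 0) (Fin.tail s)) (Fin.cons (t 0) (Fin.tail t)) := by
              rw [Fin.cons_self_tail, Fin.cons_self_tail]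
          _ = X (Fin.cons 1 (Fin.tail s)) (Fin.cons 1 (Fin.tail t)) := by rw [hs, ht]
          _ = X (Fin.cons 0 (Fin.tail s)) (Fin.cons 0 (Fin.tail t)) := e
          _ = _ := rfl
    have herm' : X'.IsHermitian := by
      apply Matrix.ext
      intro p q
      rw [Matrix.conjTranspose_apply]
      show star (X (Fin.cons 0 q) (Fin.cons 0 p)) = X (Fin.cons 0 p) (Fin.cons 0 q)
      have h := congrFun (congrFun hherm (Fin.cons 0 p)) (Fin.cons 0 q)
      rwa [Matrix.conjTranspose_apply] at h
    have htr' : X'.trace = 0 := by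
      have h := htr
      rw [Matrix.trace] at h
      rw [show ∑ i, X.diag i = ∑ s, X s s from rfl, sum_pi_succ, Fin.sum_univ_two] at h
      have e : ∀ p : Fin (n+1) → Fin 2,
          X (Fin.cons 1 p) (Fin.cons 1 p) = X (Fin.cons 0 p) (Fin.cons 0 p) := by
        intro p
        have e' := R2 (Fin.cons 1 p) (Fin.cons 1 p) (by rw [Fin.cons_zero]) (by rw [Fin.cons_zero])
        rwa [Fin.update_cons_zero] at e'
      simp only [e] at h
      have : X'.trace + X'.trace = 0 := h
      exact add_self_eq_zero.mp this
    have hcommX : xxHam n * X = X * xxHam n := by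
      ext p q
      rw [ham_mul_apply, mul_ham_apply]
      have h := congrFun (congrFun hcomm (Fin.cons 0 p)) (Fin.cons 0 q)
      rw [ham_mul_apply, mul_ham_apply] at h
      conv at h => lhs; rw [Fin.sum_univ_succ]
      conv at h => rhs; rw [Fin.sum_univ_succ]
      simp only [Fin.castSucc_zero, ← Fin.succ_castSucc, Fin.cons_succ, Fin.cons_zero,
        ← Fin.cons_update, Fin.update_cons_zero, tailEmbed_cons',
        show ((0:Fin 2) = 1) ↔ False from by decide,
        show ((1:Fin 2) = 0) ↔ False from by decide,
        false_and, and_false, if_false, if_true, eq_self_iff_true, true_and, and_true,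
        zero_mul, one_mul, ite_self, zero_add, mul_zero] at h
      exact h
    have hX0 : X' = 0 := ih X' herm' htr' (by rw [← hXeq] at *; exact hXeq ▸ hcommX)
    rw [hXeq, hX0]
    ext s t
    show (if s 0 = t 0 then (1:ℂ) else 0) * (0 : Matrix _ _ ℂ) _ _ = (0 : Matrix _ _ ℂ) s t
    simp

end XXU


theorem stmt_9 (m : ℕ)
    (X : Matrix (Fin (m + 1) → Fin 2) (Fin (m + 1) → Fin 2) ℂ)
    (hherm : X.IsHermitian) (htr : X.trace = 0)
    (hcomm : xxHam m * tailEmbed m X = tailEmbed m X * xxHam m) :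
    X = 0 := by
  exact XXU.key m X hherm htr hcomm
end

section
/- Let H_A, H_B be finite-dimensional Hilbert spaces and H = H_A ⊗ 1 + 1 ⊗ H_B + H_AB with Tr_A(H_AB) = 0 and Tr_B(H_AB) = 0. Fix β > 0. If the Gibbs state ρ_β = e^{−βH}/Tr(e^{−βH}) has product form ρ_β = ρ_A ⊗ ρ_B for some density matrices ρ_A, ρ_B, then H_AB = 0. -/
open Matrix Kronecker BigOperators
open scoped ComplexOrder

section ExpInj
open scoped Matrix.Norms.L2Operator

/-- exp is injective on Hermitian matrices. -/
theorem exp_herm_inj {n : Type*} [Fintype n] [DecidableEq n] {M N : Matrix n n ℂ}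
    (hM : M.IsHermitian) (hN : N.IsHermitian)
    (h : NormedSpace.exp M = NormedSpace.exp N) : M = N := by
  have hM' : IsSelfAdjoint M := hM
  have hN' : IsSelfAdjoint N := hN
  have h' : NormedSpace.exp M = NormedSpace.exp N := by
    exact h
  have h1 := CFC.log_exp M hM'
  have h2 := CFC.log_exp N hN'
  rw [h'] at h1
  rw [h1] at h2; exact h2

end ExpInj

theorem exp_conj_unitary {n : Type*} [Fintype n] [DecidableEq n]
    (U A : Matrix n n ℂ) (h1 : U * star U = 1) (h2 : star U * U = 1) :
    NormedSpace.exp (U * A * star U) = U * NormedSpace.exp A * star U := by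
  have hU : IsUnit U := ⟨⟨U, star U, h1, h2⟩, rfl⟩
  have hinv : U⁻¹ = star U := inv_eq_right_inv h1
  rw [← hinv, Matrix.exp_conj U A hU]

/-- Every positive definite matrix has a Hermitian logarithm. -/
theorem exists_herm_log {n : Type*} [Fintype n] [DecidableEq n]
    {P : Matrix n n ℂ} (hP : P.PosDef) :
    ∃ L : Matrix n n ℂ, L.IsHermitian ∧ NormedSpace.exp L = P := by
  have hH : P.IsHermitian := hP.1
  set U : Matrix n n ℂ := (hH.eigenvectorUnitary : Matrix n n ℂ) with hU
  have h1 : U * star U = 1 := (Matrix.mem_unitaryGroup_iff).mp hH.eigenvectorUnitary.2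
  have h2 : star U * U = 1 := (Matrix.mem_unitaryGroup_iff').mp hH.eigenvectorUnitary.2
  refine ⟨U * diagonal (fun i => (Real.log (hH.eigenvalues i) : ℂ)) * star U, ?_, ?_⟩
  · unfold Matrix.IsHermitian
    have hstar : (star fun i => ((Real.log (hH.eigenvalues i) : ℂ))) =
        fun i => ((Real.log (hH.eigenvalues i) : ℂ)) := by
      funext i; exact Complex.conj_ofReal _
    rw [conjTranspose_mul, conjTranspose_mul, diagonal_conjTranspose, hstar]
    simp only [star_star, ← star_eq_conjTranspose, mul_assoc]
  · rw [exp_conj_unitary U _ h1 h2, Matrix.exp_diagonal]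
    have : (NormedSpace.exp fun i => (Real.log (hH.eigenvalues i) : ℂ))
        = fun i => (hH.eigenvalues i : ℂ) := by
      ext i
      simp only [Pi.exp_def]
      rw [← Complex.exp_eq_exp_ℂ, ← Complex.ofReal_exp, Real.exp_log (hP.eigenvalues_pos i)]
    rw [this]
    exact hH.spectral_theorem.symm

theorem posDef_of_posSemidef_det_ne_zero {n : Type*} [Fintype n] [DecidableEq n]
    {M : Matrix n n ℂ} (hM : M.PosSemidef) (hdet : M.det ≠ 0) : M.PosDef := by
  exact hM.posDef_iff_det_ne_zero.mpr hdet

theorem exp_posDef {n : Type*} [Fintype n] [DecidableEq n]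
    {M : Matrix n n ℂ} (hM : M.IsHermitian) : (NormedSpace.exp M).PosDef := by
  have h2 : M = (2:ℂ)⁻¹ • M + (2:ℂ)⁻¹ • M := by
    rw [← add_smul]; norm_num
  have hherm : ((2:ℂ)⁻¹ • M).IsHermitian := by
    unfold Matrix.IsHermitian
    rw [conjTranspose_smul, hM.eq]
    norm_num
  set B := NormedSpace.exp ((2:ℂ)⁻¹ • M) with hB
  have hBH : Bᴴ = B := by
    rw [hB, ← Matrix.exp_conjTranspose, hherm.eq]
  have hexp : NormedSpace.exp M = Bᴴ * B := by
    rw [hBH, hB, ← Matrix.exp_add_of_commute ((2:ℂ)⁻¹ • M) ((2:ℂ)⁻¹ • M)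
      (Commute.refl _), ← h2]
  rw [hexp]
  refine posDef_of_posSemidef_det_ne_zero (Matrix.posSemidef_conjTranspose_mul_self B) ?_
  have hu : IsUnit B := Matrix.isUnit_exp _
  have : IsUnit B.det := (Matrix.isUnit_iff_isUnit_det B).mp hu
  rw [Matrix.det_mul, Matrix.det_conjTranspose]
  simp only [ne_eq, mul_eq_zero, not_or]
  exact ⟨star_ne_zero.mpr this.ne_zero, this.ne_zero⟩

theorem posDef_trace_pos {n : Type*} [Fintype n] [DecidableEq n] [Nonempty n]
    {M : Matrix n n ℂ} (hM : M.PosDef) : 0 < M.trace := by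
  have h : ∀ i, 0 < M i i := by
    intro i
    have := (Matrix.posDef_iff_dotProduct_mulVec.mp hM).2 (x := Pi.single i 1) (fun h => by simpa using congr_fun h i)
    simpa [Matrix.mulVec_single, dotProduct, Pi.single_apply, Finset.sum_ite_eq'] using this
  rw [Matrix.trace]
  exact Finset.sum_pos (fun i _ => h i) Finset.univ_nonempty

section Kron

variable {A B : Type*} [Fintype A] [Fintype B] [DecidableEq A] [DecidableEq B]

attribute [local instance] Matrix.linftyOpNormedRing Matrix.linftyOpNormedAlgebra
set_option linter.unusedSectionVars false

/-- `X ↦ X ⊗ₖ 1` as an algebra homomorphism. -/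
noncomputable def kronLeftAlgHom (A B : Type*) [Fintype A] [Fintype B] [DecidableEq A]
    [DecidableEq B] : Matrix A A ℂ →ₐ[ℂ] Matrix (A × B) (A × B) ℂ where
  toFun X := X ⊗ₖ (1 : Matrix B B ℂ)
  map_one' := Matrix.one_kronecker_one
  map_mul' X Y := by rw [← Matrix.mul_kronecker_mul, one_mul]
  map_zero' := Matrix.zero_kronecker _
  map_add' X Y := Matrix.add_kronecker _ _ _
  commutes' r := by
    simp [Algebra.algebraMap_eq_smul_one, Matrix.smul_kronecker, Matrix.one_kronecker_one]

/-- `Y ↦ 1 ⊗ₖ Y` as an algebra homomorphism. -/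
noncomputable def kronRightAlgHom (A B : Type*) [Fintype A] [Fintype B] [DecidableEq A]
    [DecidableEq B] : Matrix B B ℂ →ₐ[ℂ] Matrix (A × B) (A × B) ℂ where
  toFun Y := (1 : Matrix A A ℂ) ⊗ₖ Y
  map_one' := Matrix.one_kronecker_one
  map_mul' X Y := by rw [← Matrix.mul_kronecker_mul, one_mul]
  map_zero' := Matrix.kronecker_zero _
  map_add' X Y := Matrix.kronecker_add _ _ _
  commutes' r := by
    simp [Algebra.algebraMap_eq_smul_one, Matrix.kronecker_smul, Matrix.one_kronecker_one]

theorem exp_kron_left (X : Matrix A A ℂ) :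
    NormedSpace.exp (X ⊗ₖ (1 : Matrix B B ℂ)) = NormedSpace.exp X ⊗ₖ (1 : Matrix B B ℂ) := by
  have hc : Continuous (kronLeftAlgHom A B) :=
    LinearMap.continuous_of_finiteDimensional (kronLeftAlgHom A B).toLinearMap
  exact (NormedSpace.map_exp (kronLeftAlgHom A B) hc X).symm

theorem exp_kron_right (Y : Matrix B B ℂ) :
    NormedSpace.exp ((1 : Matrix A A ℂ) ⊗ₖ Y) = (1 : Matrix A A ℂ) ⊗ₖ NormedSpace.exp Y := by
  have hc : Continuous (kronRightAlgHom A B) :=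
    LinearMap.continuous_of_finiteDimensional (kronRightAlgHom A B).toLinearMap
  exact (NormedSpace.map_exp (kronRightAlgHom A B) hc Y).symm

theorem kron_commute (X : Matrix A A ℂ) (Y : Matrix B B ℂ) :
    Commute (X ⊗ₖ (1 : Matrix B B ℂ)) ((1 : Matrix A A ℂ) ⊗ₖ Y) := by
  unfold Commute SemiconjBy
  rw [← Matrix.mul_kronecker_mul, ← Matrix.mul_kronecker_mul, one_mul, mul_one, one_mul, mul_one]

theorem exp_kron_sum (X : Matrix A A ℂ) (Y : Matrix B B ℂ) :
    NormedSpace.exp (X ⊗ₖ (1 : Matrix B B ℂ) + (1 : Matrix A A ℂ) ⊗ₖ Y)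
      = NormedSpace.exp X ⊗ₖ NormedSpace.exp Y := by
  rw [Matrix.exp_add_of_commute _ _ (kron_commute X Y), exp_kron_left, exp_kron_right,
    ← Matrix.mul_kronecker_mul, one_mul, mul_one]

end Kron

section KronBasic
set_option linter.unusedSectionVars false

variable {A B : Type*} [Fintype A] [Fintype B] [DecidableEq A] [DecidableEq B]

theorem kron_conjTranspose (X : Matrix A A ℂ) (Y : Matrix B B ℂ) :
    (X ⊗ₖ Y)ᴴ = Xᴴ ⊗ₖ Yᴴ := by
  ext ⟨a, b⟩ ⟨c, d⟩
  simp [conjTranspose_apply, kroneckerMap_apply]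

theorem sub_kron (X Y : Matrix A A ℂ) (Z : Matrix B B ℂ) :
    (X - Y) ⊗ₖ Z = X ⊗ₖ Z - Y ⊗ₖ Z := by
  ext ⟨a, b⟩ ⟨c, d⟩
  simp [kroneckerMap_apply, sub_mul]

theorem kron_sub (X : Matrix A A ℂ) (Y Z : Matrix B B ℂ) :
    X ⊗ₖ (Y - Z) = X ⊗ₖ Y - X ⊗ₖ Z := by
  ext ⟨a, b⟩ ⟨c, d⟩
  simp [kroneckerMap_apply, mul_sub]

theorem ptraceB_kron_left (X : Matrix A A ℂ) :
    ptraceB (X ⊗ₖ (1 : Matrix B B ℂ)) = (Fintype.card B : ℂ) • X := by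
  ext i j
  simp [ptraceB, kroneckerMap_apply, Matrix.one_apply, mul_comm]

theorem ptraceB_kron_right (Y : Matrix B B ℂ) :
    ptraceB ((1 : Matrix A A ℂ) ⊗ₖ Y) = Y.trace • (1 : Matrix A A ℂ) := by
  ext i j
  simp [ptraceB, kroneckerMap_apply, Matrix.one_apply, Matrix.trace, Matrix.diag,
    Finset.mul_sum, mul_comm]

theorem ptraceA_kron_right (Y : Matrix B B ℂ) :
    ptraceA ((1 : Matrix A A ℂ) ⊗ₖ Y) = (Fintype.card A : ℂ) • Y := by
  ext i j
  simp [ptraceA, kroneckerMap_apply, Matrix.one_apply]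

theorem ptraceB_add (M N : Matrix (A × B) (A × B) ℂ) :
    ptraceB (M + N) = ptraceB M + ptraceB N := by
  ext i j
  simp [ptraceB, Finset.sum_add_distrib]

/-- A matrix of the form `P ⊗ 1 + 1 ⊗ Q` with both partial traces zero vanishes. -/
theorem local_sum_eq_zero [Nonempty A] [Nonempty B]
    (P : Matrix A A ℂ) (Q : Matrix B B ℂ) {M : Matrix (A × B) (A × B) ℂ}
    (hM : M = P ⊗ₖ (1 : Matrix B B ℂ) + (1 : Matrix A A ℂ) ⊗ₖ Q)
    (h1 : ptraceA M = 0) (h2 : ptraceB M = 0) : M = 0 := by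
  have hcB : (Fintype.card B : ℂ) ≠ 0 := Nat.cast_ne_zero.mpr Fintype.card_pos.ne'
  have hcA : (Fintype.card A : ℂ) ≠ 0 := Nat.cast_ne_zero.mpr Fintype.card_pos.ne'
  have hB0 : (Fintype.card B : ℂ) • P + Q.trace • (1 : Matrix A A ℂ) = 0 := by
    rw [← ptraceB_kron_left P, ← ptraceB_kron_right Q, ← ptraceB_add, ← hM, h2]
  have hP : P = (-(Q.trace) / (Fintype.card B : ℂ)) • (1 : Matrix A A ℂ) := by
    ext i j
    have h := congr_fun (congr_fun hB0 i) j
    simp only [Matrix.add_apply, Matrix.smul_apply, smul_eq_mul, Matrix.zero_apply] at h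
    rw [Matrix.smul_apply, smul_eq_mul]
    field_simp
    linear_combination h
  have hM' : M = (1 : Matrix A A ℂ) ⊗ₖ (Q + (-(Q.trace) / (Fintype.card B : ℂ)) •
      (1 : Matrix B B ℂ)) := by
    rw [hM, hP, Matrix.kronecker_add, Matrix.kronecker_smul, Matrix.smul_kronecker,
      Matrix.one_kronecker_one]
    exact add_comm _ _
  have hA0 : (Fintype.card A : ℂ) • (Q + (-(Q.trace) / (Fintype.card B : ℂ)) •
      (1 : Matrix B B ℂ)) = 0 := by
    rw [← ptraceA_kron_right, ← hM', h1]
  have hQ : Q + (-(Q.trace) / (Fintype.card B : ℂ)) • (1 : Matrix B B ℂ) = 0 :=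
    (smul_eq_zero.mp hA0).resolve_left hcA
  rw [hM', hQ, Matrix.kronecker_zero]

end KronBasic

theorem stmt_16 {A B : Type*} [Fintype A] [Fintype B] [DecidableEq A] [DecidableEq B]
    [Nonempty A] [Nonempty B]
    (HA : Matrix A A ℂ) (HB : Matrix B B ℂ) (HAB : Matrix (A × B) (A × B) ℂ)
    (hHA : HA.IsHermitian) (hHB : HB.IsHermitian) (hHAB : HAB.IsHermitian)
    (htrA : ptraceA HAB = 0) (htrB : ptraceB HAB = 0)
    (H : Matrix (A × B) (A × B) ℂ)
    (hH : H = HA ⊗ₖ (1 : Matrix B B ℂ) + (1 : Matrix A A ℂ) ⊗ₖ HB + HAB)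
    (β : ℝ) (hβ : 0 < β)
    (ρβ : Matrix (A × B) (A × B) ℂ)
    (hρβ : ρβ = ((NormedSpace.exp ((-(β : ℂ)) • H)).trace)⁻¹ •
      NormedSpace.exp ((-(β : ℂ)) • H))
    (ρA : Matrix A A ℂ) (ρB : Matrix B B ℂ)
    (hρA : ρA.PosSemidef) (hρAtr : ρA.trace = 1)
    (hρB : ρB.PosSemidef) (hρBtr : ρB.trace = 1)
    (hprod : ρβ = ρA ⊗ₖ ρB) :
    HAB = 0 := by
  haveI : Nonempty (A × B) := ⟨⟨Classical.arbitrary A, Classical.arbitrary B⟩⟩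
  set E := NormedSpace.exp ((-(β : ℂ)) • H) with hE
  -- H and -βH are Hermitian
  have hHherm : H.IsHermitian := by
    rw [hH]
    refine Matrix.IsHermitian.add (Matrix.IsHermitian.add ?_ ?_) hHAB
    · unfold Matrix.IsHermitian
      rw [kron_conjTranspose, hHA.eq, conjTranspose_one]
    · unfold Matrix.IsHermitian
      rw [kron_conjTranspose, hHB.eq, conjTranspose_one]
  have hSA : ((-(β : ℂ)) • H).IsHermitian := by
    unfold Matrix.IsHermitian
    rw [conjTranspose_smul, hHherm.eq]
    congr 1
    simp [Complex.conj_ofReal]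
  -- exp(-βH) is positive definite with positive real trace
  have hEpd : E.PosDef := exp_posDef hSA
  have hZpos : 0 < E.trace := posDef_trace_pos hEpd
  set z := E.trace.re with hz
  have hzpos : 0 < z := (Complex.lt_def.mp hZpos).1
  have hZ : E.trace = (z : ℂ) := by
    apply Complex.ext
    · rfl
    · simpa using ((Complex.lt_def.mp hZpos).2).symm
  have hZne : E.trace ≠ 0 := hZpos.ne'
  -- E = z • (ρA ⊗ ρB)
  have hEeq : E = (z : ℂ) • (ρA ⊗ₖ ρB) := by
    rw [← hprod, hρβ, smul_smul, ← hZ, mul_inv_cancel₀ hZne, one_smul]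
  -- determinants are nonzero, so ρA and ρB are positive definite
  have hdetE : E.det ≠ 0 := ne_of_gt hEpd.det_pos
  have hdetk : (ρA ⊗ₖ ρB).det ≠ 0 := by
    intro h
    rw [hEeq, Matrix.det_smul, h, mul_zero] at hdetE
    exact hdetE rfl
  rw [Matrix.det_kronecker] at hdetk
  have hdetA : ρA.det ≠ 0 := by
    intro h
    apply hdetk
    rw [h, zero_pow Fintype.card_pos.ne', zero_mul]
  have hdetB : ρB.det ≠ 0 := by
    intro h
    apply hdetk
    rw [h, zero_pow Fintype.card_pos.ne', mul_zero]
  have hρApd : ρA.PosDef := posDef_of_posSemidef_det_ne_zero hρA hdetA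
  have hρBpd : ρB.PosDef := posDef_of_posSemidef_det_ne_zero hρB hdetB
  -- z • ρA is positive definite
  have hzρApd : ((z : ℂ) • ρA).PosDef := by
    rw [Matrix.posDef_iff_dotProduct_mulVec]
    constructor
    · unfold Matrix.IsHermitian
      rw [conjTranspose_smul, hρApd.1.eq]
      congr 1
      simp [Complex.conj_ofReal]
    · intro x hx
      rw [Matrix.smul_mulVec, dotProduct_smul, smul_eq_mul]
      exact mul_pos (by exact_mod_cast hzpos) ((Matrix.posDef_iff_dotProduct_mulVec.mp hρApd).2 hx)
  -- take Hermitian logarithms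
  obtain ⟨LA, hLA, hLAe⟩ := exists_herm_log hzρApd
  obtain ⟨LB, hLB, hLBe⟩ := exists_herm_log hρBpd
  -- E = exp(LA ⊗ 1 + 1 ⊗ LB)
  have hkey : NormedSpace.exp ((-(β : ℂ)) • H)
      = NormedSpace.exp (LA ⊗ₖ (1 : Matrix B B ℂ) + (1 : Matrix A A ℂ) ⊗ₖ LB) := by
    rw [exp_kron_sum, hLAe, hLBe, ← hE, hEeq, Matrix.smul_kronecker]
  -- Hermitian sum
  have hNherm : (LA ⊗ₖ (1 : Matrix B B ℂ) + (1 : Matrix A A ℂ) ⊗ₖ LB).IsHermitian := by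
    refine Matrix.IsHermitian.add ?_ ?_
    · unfold Matrix.IsHermitian
      rw [kron_conjTranspose, hLA.eq, conjTranspose_one]
    · unfold Matrix.IsHermitian
      rw [kron_conjTranspose, hLB.eq, conjTranspose_one]
  have heq : (-(β : ℂ)) • H = LA ⊗ₖ (1 : Matrix B B ℂ) + (1 : Matrix A A ℂ) ⊗ₖ LB :=
    exp_herm_inj hSA hNherm hkey
  -- solve for H
  have hbne : (-(β : ℂ)) ≠ 0 := by
    simp only [ne_eq, neg_eq_zero, Complex.ofReal_eq_zero]
    exact hβ.ne'
  set c := (-(β : ℂ))⁻¹ with hc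
  have hHc : H = c • (LA ⊗ₖ (1 : Matrix B B ℂ) + (1 : Matrix A A ℂ) ⊗ₖ LB) := by
    rw [← heq, hc, smul_smul, inv_mul_cancel₀ hbne, one_smul]
  -- HAB is a sum of local terms
  have hHABloc : HAB = (c • LA - HA) ⊗ₖ (1 : Matrix B B ℂ)
      + (1 : Matrix A A ℂ) ⊗ₖ (c • LB - HB) := by
    rw [sub_kron, kron_sub, Matrix.smul_kronecker, Matrix.kronecker_smul]
    have : HAB = H - (HA ⊗ₖ (1 : Matrix B B ℂ) + (1 : Matrix A A ℂ) ⊗ₖ HB) := by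
      rw [hH]; abel
    rw [this, hHc, smul_add]
    abel
  exact local_sum_eq_zero _ _ hHABloc htrA htrB
end
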